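/- Let V be a finite set of size n ≥ 1 and W a finite set partitioned into W₁, W₂. Suppose F is a set of pairs between V and W such that every connected component of the graph (V ∪ W, F) is either a path on three vertices with middle vertex in V, or a cycle on eight vertices alternating between V and W. Then, provided |W₁| = |W₂| ≥ |V ∩ (∪F)|, one can choose the partition W = W₁ ∪ W₂ so that no vertex of V has two F-neighbors in the same part W_t (t ∈ {1, 2}). -/

import Mathlib

open SimpleGraph Finset

private lemma neighbor_mem_aux {α : Type*} [DecidableEq α] {V W : Finset α} (hVW : Disjoint V W)
    {F : Set (Sym2 α)} (hFE : F ⊆ {e : Sym2 α | ∃ a ∈ V, ∃ b ∈ W, e = s(a, b)})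
    {v w : α} (hv : v ∈ V) (h : s(v, w) ∈ F) : w ∈ W ∧ (fromEdgeSet F).Adj v w := by
  obtain ⟨a, ha, b, hb, he⟩ := hFE h
  have hw : w ∈ W := by
    rcases Sym2.eq_iff.mp he with ⟨rfl, rfl⟩ | ⟨rfl, rfl⟩
    · exact hb
    · exact absurd hv (Finset.disjoint_right.mp hVW hb)
  refine ⟨hw, (fromEdgeSet_adj _).mpr ⟨h, fun hvw => ?_⟩⟩
  exact Finset.disjoint_left.mp hVW hv (hvw ▸ hw)

private lemma key_component {α : Type*} [DecidableEq α] {V W : Finset α} (hVW : Disjoint V W)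
    {F : Set (Sym2 α)} (hFE : F ⊆ {e : Sym2 α | ∃ a ∈ V, ∃ b ∈ W, e = s(a, b)}) (r : α)
    (hr : (∃ a b c : α, b ∈ V ∧ a ∈ W ∧ c ∈ W ∧ a ≠ c ∧
        s(a, b) ∈ F ∧ s(b, c) ∈ F ∧
        {v | (SimpleGraph.fromEdgeSet F).Reachable r v} = {a, b, c}) ∨
      (∃ x : Fin 8 → α, Function.Injective x ∧
        (∀ i : Fin 8, if i.val % 2 = 0 then x i ∈ V else x i ∈ W) ∧
        (∀ i : Fin 8, s(x i, x (i + 1)) ∈ F) ∧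
        (∀ i j : Fin 8, s(x i, x j) ∈ F → j = i + 1 ∨ i = j + 1) ∧
        {v | (SimpleGraph.fromEdgeSet F).Reachable r v} = Set.range x)) :
    ∃ s t vs : Finset α,
      (∀ w ∈ s ∪ t, w ∈ W ∧ (fromEdgeSet F).Reachable r w) ∧
      (∀ w ∈ W, (fromEdgeSet F).Reachable r w → w ∈ s ∪ t) ∧
      Disjoint s t ∧ s.card = t.card ∧ s.card ≤ vs.card ∧
      (∀ v ∈ vs, v ∈ V ∧ (fromEdgeSet F).Reachable r v ∧ ∃ e ∈ F, v ∈ e) ∧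
      (∀ u, (fromEdgeSet F).Reachable r u → ∃ e ∈ F, u ∈ e) ∧
      (∀ v ∈ V, (fromEdgeSet F).Reachable r v → ∀ w w' : α, s(v, w) ∈ F → s(v, w') ∈ F →
        w ≠ w' → ¬(w ∈ s ∧ w' ∈ s) ∧ ¬(w ∈ t ∧ w' ∈ t)) := by
  rcases hr with ⟨a, b, c, hbV, haW, hcW, hac, hab, hbc, hset⟩ |
    ⟨x, hinj, hxVW, hE, hchar, hset⟩
  · -- P₃ case
    have hreach : ∀ u, (fromEdgeSet F).Reachable r u ↔ u ∈ ({a, b, c} : Set α) :=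
      fun u => Set.ext_iff.mp hset u
    refine ⟨{a}, {c}, {b}, ?_, ?_, ?_, ?_, ?_, ?_, ?_, ?_⟩
    · intro w hw
      simp only [Finset.mem_union, Finset.mem_singleton] at hw
      rcases hw with rfl | rfl
      · exact ⟨haW, (hreach w).mpr (by simp)⟩
      · exact ⟨hcW, (hreach w).mpr (by simp)⟩
    · intro w hwW hwr
      have hw3 := (hreach w).mp hwr
      simp only [Set.mem_insert_iff, Set.mem_singleton_iff] at hw3
      simp only [Finset.mem_union, Finset.mem_singleton]
      rcases hw3 with rfl | rfl | rfl
      · exact Or.inl rfl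
      · exact absurd hwW (Finset.disjoint_left.mp hVW hbV)
      · exact Or.inr rfl
    · simpa using hac
    · simp
    · simp
    · intro v hv
      have hv' : v = b := Finset.mem_singleton.mp hv
      rw [hv']
      exact ⟨hbV, (hreach b).mpr (by simp), ⟨s(a, b), hab, by simp⟩⟩
    · intro u hu
      have hu3 := (hreach u).mp hu
      simp only [Set.mem_insert_iff, Set.mem_singleton_iff] at hu3
      rcases hu3 with h | h | h <;> rw [h]
      · exact ⟨s(a, b), hab, by simp⟩
      · exact ⟨s(a, b), hab, by simp⟩
      · exact ⟨s(b, c), hbc, by simp⟩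
    · intro v hvV hvr w w' hw hw' hne
      constructor
      · rintro ⟨h1, h2⟩
        simp only [Finset.mem_singleton] at h1 h2
        exact hne (h1.trans h2.symm)
      · rintro ⟨h1, h2⟩
        simp only [Finset.mem_singleton] at h1 h2
        exact hne (h1.trans h2.symm)
  · -- C₈ case
    have hreach : ∀ u, (fromEdgeSet F).Reachable r u ↔ u ∈ Set.range x :=
      fun u => Set.ext_iff.mp hset u
    have hV8 : ∀ i : Fin 8, i.val % 2 = 0 → x i ∈ V := fun i h => by
      have := hxVW i; rwa [if_pos h] at this
    have hW8 : ∀ i : Fin 8, i.val % 2 ≠ 0 → x i ∈ W := fun i h => by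
      have := hxVW i; rwa [if_neg h] at this
    have hne15 : x 1 ≠ x 5 := fun h => absurd (hinj h) (by decide)
    have hne37 : x 3 ≠ x 7 := fun h => absurd (hinj h) (by decide)
    have hne04 : x 0 ≠ x 4 := fun h => absurd (hinj h) (by decide)
    refine ⟨{x 1, x 5}, {x 3, x 7}, {x 0, x 4}, ?_, ?_, ?_, ?_, ?_, ?_, ?_, ?_⟩
    · intro w hw
      simp only [Finset.mem_union, Finset.mem_insert, Finset.mem_singleton] at hw
      rcases hw with (rfl | rfl) | (rfl | rfl)
      · exact ⟨hW8 1 (by decide), (hreach _).mpr ⟨1, rfl⟩⟩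
      · exact ⟨hW8 5 (by decide), (hreach _).mpr ⟨5, rfl⟩⟩
      · exact ⟨hW8 3 (by decide), (hreach _).mpr ⟨3, rfl⟩⟩
      · exact ⟨hW8 7 (by decide), (hreach _).mpr ⟨7, rfl⟩⟩
    · intro w hwW hwr
      obtain ⟨i, rfl⟩ := (hreach w).mp hwr
      have hi : i.val % 2 ≠ 0 := fun h => Finset.disjoint_left.mp hVW (hV8 i h) hwW
      have hodd' : ∀ k : Fin 8, k.val % 2 ≠ 0 → k = 1 ∨ k = 3 ∨ k = 5 ∨ k = 7 := by decide
      have hodd := hodd' i hi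
      simp only [Finset.mem_union, Finset.mem_insert, Finset.mem_singleton]
      rcases hodd with rfl | rfl | rfl | rfl
      · exact Or.inl (Or.inl rfl)
      · exact Or.inr (Or.inl rfl)
      · exact Or.inl (Or.inr rfl)
      · exact Or.inr (Or.inr rfl)
    · rw [Finset.disjoint_left]
      rintro w hw1 hw2
      simp only [Finset.mem_insert, Finset.mem_singleton] at hw1 hw2
      rcases hw1 with rfl | rfl <;> rcases hw2 with h | h <;>
        exact absurd (hinj h) (by decide)
    · rw [Finset.card_pair hne15, Finset.card_pair hne37]
    · rw [Finset.card_pair hne15, Finset.card_pair hne04]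
    · intro v hv
      simp only [Finset.mem_insert, Finset.mem_singleton] at hv
      rcases hv with rfl | rfl
      · exact ⟨hV8 0 (by decide), (hreach _).mpr ⟨0, rfl⟩, ⟨s(x 0, x (0 + 1)), hE 0, by simp⟩⟩
      · exact ⟨hV8 4 (by decide), (hreach _).mpr ⟨4, rfl⟩, ⟨s(x 4, x (4 + 1)), hE 4, by simp⟩⟩
    · intro u hu
      obtain ⟨i, rfl⟩ := (hreach u).mp hu
      exact ⟨s(x i, x (i + 1)), hE i, by simp⟩
    · intro v hvV hvr w w' hw hw' hne
      obtain ⟨i, rfl⟩ := (hreach v).mp hvr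
      have hie : i.val % 2 = 0 := by
        by_contra h
        exact Finset.disjoint_left.mp hVW hvV (hW8 i h)
      obtain ⟨hwW, hadj⟩ := neighbor_mem_aux hVW hFE hvV hw
      obtain ⟨hw'W, hadj'⟩ := neighbor_mem_aux hVW hFE hvV hw'
      obtain ⟨j, rfl⟩ := (hreach w).mp (hvr.trans hadj.reachable)
      obtain ⟨j', rfl⟩ := (hreach w').mp (hvr.trans hadj'.reachable)
      have h1 := hchar i j hw
      have h2 := hchar i j' hw'
      have hjj : j ≠ j' := fun h => hne (congrArg x h)
      have main : ∀ (i j j' : Fin 8), i.val % 2 = 0 → (j = i + 1 ∨ i = j + 1) →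
          (j' = i + 1 ∨ i = j' + 1) → j ≠ j' →
          (¬((j = 1 ∨ j = 5) ∧ (j' = 1 ∨ j' = 5)) ∧
            ¬((j = 3 ∨ j = 7) ∧ (j' = 3 ∨ j' = 7))) := by decide
      have hmain := main i j j' hie h1 h2 hjj
      constructor
      · rintro ⟨ha, hb⟩
        simp only [Finset.mem_insert, Finset.mem_singleton] at ha hb
        exact hmain.1 ⟨ha.imp (fun h => hinj h) (fun h => hinj h),
          hb.imp (fun h => hinj h) (fun h => hinj h)⟩
      · rintro ⟨ha, hb⟩
        simp only [Finset.mem_insert, Finset.mem_singleton] at ha hb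
        exact hmain.2 ⟨ha.imp (fun h => hinj h) (fun h => hinj h),
          hb.imp (fun h => hinj h) (fun h => hinj h)⟩

/-- Balanced bipartition separating `F`-neighbors. Let `V` be nonempty, `W` a finite
set with `|W| = 2m`, and `F` a set of pairs between `V` and `W` whose connected
components are `P₃`s with center in `V` or `C₈`s alternating between `V` and `W`.
If `m ≥ |V ∩ ⋃F|`, then `W` can be partitioned into `W₁, W₂` of size `m` each such
that no vertex of `V` has two `F`-neighbors in the same part. -/
theorem balanced_bipartition_exists {α : Type*} [DecidableEq α]
    (V W : Finset α) (hVW : Disjoint V W) (hVne : V.Nonempty)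
    (F : Set (Sym2 α))
    (hFE : F ⊆ {e : Sym2 α | ∃ a ∈ V, ∃ b ∈ W, e = s(a, b)})
    (hcomp : ∀ u : α, (∃ e ∈ F, u ∈ e) →
      (∃ a b c : α, b ∈ V ∧ a ∈ W ∧ c ∈ W ∧ a ≠ c ∧
        s(a, b) ∈ F ∧ s(b, c) ∈ F ∧
        {v | (SimpleGraph.fromEdgeSet F).Reachable u v} = {a, b, c}) ∨
      (∃ x : Fin 8 → α, Function.Injective x ∧
        (∀ i : Fin 8, if i.val % 2 = 0 then x i ∈ V else x i ∈ W) ∧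
        (∀ i : Fin 8, s(x i, x (i + 1)) ∈ F) ∧
        (∀ i j : Fin 8, s(x i, x j) ∈ F → j = i + 1 ∨ i = j + 1) ∧
        {v | (SimpleGraph.fromEdgeSet F).Reachable u v} = Set.range x))
    (m : ℕ) (hW : W.card = 2 * m)
    (hm : {v : α | v ∈ V ∧ ∃ e ∈ F, v ∈ e}.ncard ≤ m) :
    ∃ W₁ W₂ : Finset α, W₁ ∪ W₂ = W ∧ Disjoint W₁ W₂ ∧ W₁.card = m ∧ W₂.card = m ∧
      ∀ v ∈ V, ∀ w w' : α, s(v, w) ∈ F → s(v, w') ∈ F → w ≠ w' →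
        ¬ (w ∈ W₁ ∧ w' ∈ W₁) ∧ ¬ (w ∈ W₂ ∧ w' ∈ W₂) := by
  classical
  set G := SimpleGraph.fromEdgeSet F with hGdef
  let R : α → α := fun u => Quot.out (G.connectedComponentMk u)
  have hRreach : ∀ u, G.Reachable u (R u) := fun u =>
    (SimpleGraph.ConnectedComponent.eq.mp (Quot.out_eq (G.connectedComponentMk u))).symm
  have hRconst : ∀ u v, G.Reachable u v → R u = R v := fun u v h =>
    congrArg Quot.out (SimpleGraph.ConnectedComponent.sound h)
  have hRR : ∀ u, R (R u) = R u := fun u => (hRconst u (R u) (hRreach u)).symm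
  have hkey : ∀ r : α, ∃ s t vs : Finset α, (∃ e ∈ F, r ∈ e) →
      ((∀ w ∈ s ∪ t, w ∈ W ∧ G.Reachable r w) ∧
      (∀ w ∈ W, G.Reachable r w → w ∈ s ∪ t) ∧
      Disjoint s t ∧ s.card = t.card ∧ s.card ≤ vs.card ∧
      (∀ v ∈ vs, v ∈ V ∧ G.Reachable r v ∧ ∃ e ∈ F, v ∈ e) ∧
      (∀ u, G.Reachable r u → ∃ e ∈ F, u ∈ e) ∧
      (∀ v ∈ V, G.Reachable r v → ∀ w w' : α, s(v, w) ∈ F → s(v, w') ∈ F →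
        w ≠ w' → ¬(w ∈ s ∧ w' ∈ s) ∧ ¬(w ∈ t ∧ w' ∈ t))) := by
    intro r
    by_cases h : ∃ e ∈ F, r ∈ e
    · obtain ⟨s, t, vs, h1, h2, h3, h4, h5, h6, h7, h8⟩ := key_component hVW hFE r (hcomp r h)
      exact ⟨s, t, vs, fun _ => ⟨h1, h2, h3, h4, h5, h6, h7, h8⟩⟩
    · exact ⟨∅, ∅, ∅, fun h' => absurd h' h⟩
  choose s t vs hstv using hkey
  let WA : Finset α := W.filter (fun w => ∃ e ∈ F, w ∈ e)
  let VA : Finset α := V.filter (fun v => ∃ e ∈ F, v ∈ e)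
  let Reps : Finset α := WA.image R
  have hRepsAct : ∀ r ∈ Reps, (∃ e ∈ F, r ∈ e) ∧ R r = r := by
    intro r hr
    obtain ⟨w, hw, rfl⟩ := Finset.mem_image.mp hr
    have hwact := (Finset.mem_filter.mp hw).2
    have hract := ((hstv w hwact).2.2.2.2.2.2.1) (R w) (hRreach w)
    exact ⟨hract, hRR w⟩
  have hown : ∀ r ∈ Reps, ∀ w, w ∈ s r ∪ t r → R w = r := by
    intro r hr w hw
    have h := ((hstv r (hRepsAct r hr).1).1 w hw).2
    rw [← hRconst r w h]
    exact (hRepsAct r hr).2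
  have hownv : ∀ r ∈ Reps, ∀ v ∈ vs r, R v = r := by
    intro r hr v hv
    have h := ((hstv r (hRepsAct r hr).1).2.2.2.2.2.1 v hv).2.1
    rw [← hRconst r v h]
    exact (hRepsAct r hr).2
  let S : Finset α := Reps.biUnion s
  let T : Finset α := Reps.biUnion t
  have hdisjS : ∀ r ∈ Reps, ∀ r' ∈ Reps, r ≠ r' → Disjoint (s r) (s r') := by
    intro r hr r' hr' hne
    rw [Finset.disjoint_left]
    intro w hw hw'
    exact hne ((hown r hr w (Finset.mem_union_left _ hw)).symm.trans
      (hown r' hr' w (Finset.mem_union_left _ hw')))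
  have hdisjT : ∀ r ∈ Reps, ∀ r' ∈ Reps, r ≠ r' → Disjoint (t r) (t r') := by
    intro r hr r' hr' hne
    rw [Finset.disjoint_left]
    intro w hw hw'
    exact hne ((hown r hr w (Finset.mem_union_right _ hw)).symm.trans
      (hown r' hr' w (Finset.mem_union_right _ hw')))
  have hdisjVS : ∀ r ∈ Reps, ∀ r' ∈ Reps, r ≠ r' → Disjoint (vs r) (vs r') := by
    intro r hr r' hr' hne
    rw [Finset.disjoint_left]
    intro v hv hv'
    exact hne ((hownv r hr v hv).symm.trans (hownv r' hr' v hv'))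
  have hST : Disjoint S T := by
    rw [Finset.disjoint_left]
    intro w hwS hwT
    obtain ⟨r, hr, hws⟩ := Finset.mem_biUnion.mp hwS
    obtain ⟨r', hr', hwt⟩ := Finset.mem_biUnion.mp hwT
    have hrr : r = r' := (hown r hr w (Finset.mem_union_left _ hws)).symm.trans
      (hown r' hr' w (Finset.mem_union_right _ hwt))
    subst hrr
    exact Finset.disjoint_left.mp (hstv r (hRepsAct r hr).1).2.2.1 hws hwt
  have hSTWA : S ∪ T = WA := by
    ext w
    constructor
    · intro hw
      rcases Finset.mem_union.mp hw with hw | hw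
      · obtain ⟨r, hr, hws⟩ := Finset.mem_biUnion.mp hw
        obtain ⟨hwW, hwr⟩ := (hstv r (hRepsAct r hr).1).1 w (Finset.mem_union_left _ hws)
        exact Finset.mem_filter.mpr ⟨hwW, (hstv r (hRepsAct r hr).1).2.2.2.2.2.2.1 w hwr⟩
      · obtain ⟨r, hr, hwt⟩ := Finset.mem_biUnion.mp hw
        obtain ⟨hwW, hwr⟩ := (hstv r (hRepsAct r hr).1).1 w (Finset.mem_union_right _ hwt)
        exact Finset.mem_filter.mpr ⟨hwW, (hstv r (hRepsAct r hr).1).2.2.2.2.2.2.1 w hwr⟩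
    · intro hw
      obtain ⟨hwW, hwact⟩ := Finset.mem_filter.mp hw
      have hrR : R w ∈ Reps := Finset.mem_image_of_mem R hw
      have hre : G.Reachable (R w) w := (hRreach w).symm
      have hcov := (hstv (R w) (hRepsAct _ hrR).1).2.1 w hwW hre
      rcases Finset.mem_union.mp hcov with h | h
      · exact Finset.mem_union_left _ (Finset.mem_biUnion.mpr ⟨R w, hrR, h⟩)
      · exact Finset.mem_union_right _ (Finset.mem_biUnion.mpr ⟨R w, hrR, h⟩)
  have hcards : S.card = T.card := by
    rw [Finset.card_biUnion hdisjS, Finset.card_biUnion hdisjT]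
    exact Finset.sum_congr rfl (fun r hr => (hstv r (hRepsAct r hr).1).2.2.2.1)
  have hSm : S.card ≤ m := by
    have h1 : S.card ≤ (Reps.biUnion vs).card := by
      rw [Finset.card_biUnion hdisjS, Finset.card_biUnion hdisjVS]
      exact Finset.sum_le_sum (fun r hr => (hstv r (hRepsAct r hr).1).2.2.2.2.1)
    have h2 : Reps.biUnion vs ⊆ VA := by
      intro v hv
      obtain ⟨r, hr, hvr⟩ := Finset.mem_biUnion.mp hv
      obtain ⟨hvV, _, hvact⟩ := (hstv r (hRepsAct r hr).1).2.2.2.2.2.1 v hvr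
      exact Finset.mem_filter.mpr ⟨hvV, hvact⟩
    have h3 : VA.card ≤ m := by
      have hset : {v : α | v ∈ V ∧ ∃ e ∈ F, v ∈ e} = ↑VA := by
        ext v
        simp [VA]
      rw [hset, Set.ncard_coe_finset] at hm
      exact hm
    exact h1.trans ((Finset.card_le_card h2).trans h3)
  have hWA2k : WA.card = 2 * S.card := by
    rw [← hSTWA, Finset.card_union_of_disjoint hST, ← hcards]
    ring
  have hWAW : WA ⊆ W := Finset.filter_subset _ _
  have hSWA : S ⊆ WA := hSTWA ▸ Finset.subset_union_left
  have hTWA : T ⊆ WA := hSTWA ▸ Finset.subset_union_right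
  have hrest : (W \ WA).card = 2 * m - 2 * S.card := by
    rw [Finset.card_sdiff_of_subset hWAW, hW, hWA2k]
  have hle : m - S.card ≤ (W \ WA).card := by
    rw [hrest]
    omega
  obtain ⟨P, hPsub, hPcard⟩ := Finset.exists_subset_card_eq (s := W \ WA) (n := m - S.card) hle
  have hSP : Disjoint S P := by
    rw [Finset.disjoint_left]
    intro w hwS hwP
    exact (Finset.mem_sdiff.mp (hPsub hwP)).2 (hSWA hwS)
  have hW1W : S ∪ P ⊆ W := Finset.union_subset (hSWA.trans hWAW) (hPsub.trans Finset.sdiff_subset)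
  have hW1card : (S ∪ P).card = m := by
    rw [Finset.card_union_of_disjoint hSP, hPcard]
    omega
  refine ⟨S ∪ P, W \ (S ∪ P), Finset.union_sdiff_of_subset hW1W, Finset.disjoint_sdiff,
    hW1card, ?_, ?_⟩
  · rw [Finset.card_sdiff_of_subset hW1W, hW, hW1card]
    omega
  · intro v hvV w w' hw hw' hne
    obtain ⟨hwW, hadj⟩ := neighbor_mem_aux hVW hFE hvV hw
    obtain ⟨hw'W, hadj'⟩ := neighbor_mem_aux hVW hFE hvV hw'
    have hwact : ∃ e ∈ F, w ∈ e := ⟨s(v, w), hw, by simp⟩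
    have hw'act : ∃ e ∈ F, w' ∈ e := ⟨s(v, w'), hw', by simp⟩
    have hwWA : w ∈ WA := Finset.mem_filter.mpr ⟨hwW, hwact⟩
    have hw'WA : w' ∈ WA := Finset.mem_filter.mpr ⟨hw'W, hw'act⟩
    have hrReps : R w ∈ Reps := Finset.mem_image_of_mem R hwWA
    have hrw : G.Reachable (R w) w := (hRreach w).symm
    have hrv : G.Reachable (R w) v := hrw.trans hadj.symm.reachable
    have hrw' : G.Reachable (R w) w' := hrv.trans hadj'.reachable
    obtain ⟨c1, c2, c3, c4, c5, c6, c7, c8⟩ := hstv (R w) (hRepsAct _ hrReps).1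
    have hsep := c8 v hvV hrv w w' hw hw' hne
    have hwst : w ∈ s (R w) ∪ t (R w) := c2 w hwW hrw
    have hw'st : w' ∈ s (R w) ∪ t (R w) := c2 w' hw'W hrw'
    have hSmem : ∀ u, u ∈ s (R w) ∪ t (R w) → (u ∈ S ↔ u ∈ s (R w)) := by
      intro u hu
      constructor
      · intro huS
        obtain ⟨r', hr', hus⟩ := Finset.mem_biUnion.mp huS
        have hrr : r' = R w := (hown r' hr' u (Finset.mem_union_left _ hus)).symm.trans
          (hown _ hrReps u hu)
        exact hrr ▸ hus
      · intro h
        exact Finset.mem_biUnion.mpr ⟨R w, hrReps, h⟩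
    have hwnP : w ∉ P := fun h => (Finset.mem_sdiff.mp (hPsub h)).2 hwWA
    have hw'nP : w' ∉ P := fun h => (Finset.mem_sdiff.mp (hPsub h)).2 hw'WA
    constructor
    · rintro ⟨h1, h2⟩
      have h1S : w ∈ S := (Finset.mem_union.mp h1).resolve_right hwnP
      have h2S : w' ∈ S := (Finset.mem_union.mp h2).resolve_right hw'nP
      exact hsep.1 ⟨(hSmem w hwst).mp h1S, (hSmem w' hw'st).mp h2S⟩
    · rintro ⟨h1, h2⟩
      have h1n : w ∉ S ∪ P := (Finset.mem_sdiff.mp h1).2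
      have h2n : w' ∉ S ∪ P := (Finset.mem_sdiff.mp h2).2
      have hwS : w ∉ S := fun h => h1n (Finset.mem_union_left _ h)
      have hw'S : w' ∉ S := fun h => h2n (Finset.mem_union_left _ h)
      have hwt : w ∈ t (R w) :=
        (Finset.mem_union.mp hwst).resolve_left (fun h => hwS ((hSmem w hwst).mpr h))
      have hw't : w' ∈ t (R w) :=
        (Finset.mem_union.mp hw'st).resolve_left (fun h => hw'S ((hSmem w' hw'st).mpr h))
      exact hsep.2 ⟨hwt, hw't⟩
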